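/- arXiv:1908.01535 — 2 statements merged into one kernel-verified Lean document; each statement's English description precedes it below -/
import Mathlib

section
/- If X and Y are modular flats of a simple matroid M, then X ∩ Y is a modular flat of M. -/
open scoped Classical

namespace Paper

variable {α : Type*}

open Set

section Aux
variable {M : Matroid α} {I J X Y : Set α}

/-- The rank of a set in a matroid: the maximum size of an independent subset. -/
noncomputable def mrk (M : Matroid α) (X : Set α) : ℕ :=
  sSup {n | ∃ I, M.Indep I ∧ I ⊆ X ∧ I.ncard = n}

lemma basis'_mrk_eq (hfin : M.E.Finite) (hI : M.IsBasis' I X) : mrk M X = I.ncard := by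
  have hub : ∀ n ∈ {n | ∃ I, M.Indep I ∧ I ⊆ X ∧ I.ncard = n}, n ≤ I.ncard := by
    rintro n ⟨J, hJ, hJX, rfl⟩
    obtain ⟨K, hK, hJK⟩ := hJ.subset_isBasis'_of_subset hJX
    have hKI : K.encard = I.encard := hK.encard_eq_encard hI
    have h1 : J.ncard ≤ K.ncard :=
      Set.ncard_le_ncard hJK (hfin.subset hK.indep.subset_ground)
    have h2 : K.ncard = I.ncard := by rw [Set.ncard_def, hKI, ← Set.ncard_def]
    omega
  have hmem : I.ncard ∈ {n | ∃ I, M.Indep I ∧ I ⊆ X ∧ I.ncard = n} :=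
    ⟨I, hI.indep, hI.subset, rfl⟩
  exact le_antisymm (csSup_le ⟨_, hmem⟩ hub) (le_csSup ⟨_, hub⟩ hmem)

lemma indep_ncard_le_mrk (hfin : M.E.Finite) (hJ : M.Indep J) (hJX : J ⊆ X) :
    J.ncard ≤ mrk M X := by
  obtain ⟨K, hK, hJK⟩ := hJ.subset_isBasis'_of_subset hJX
  rw [basis'_mrk_eq hfin hK]
  exact Set.ncard_le_ncard hJK (hfin.subset hK.indep.subset_ground)

lemma mrk_mono (hfin : M.E.Finite) (hXY : X ⊆ Y) : mrk M X ≤ mrk M Y := by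
  obtain ⟨I, hI⟩ := M.exists_isBasis' X
  rw [basis'_mrk_eq hfin hI]
  exact indep_ncard_le_mrk hfin hI.indep (hI.subset.trans hXY)

lemma mrk_closure_eq (hfin : M.E.Finite) (X : Set α) : mrk M (M.closure X) = mrk M X := by
  obtain ⟨I, hI⟩ := M.exists_isBasis' X
  rw [basis'_mrk_eq hfin hI, basis'_mrk_eq hfin hI.isBasis_closure_right.isBasis']

lemma mrk_submod (hfin : M.E.Finite) (X Y : Set α) :
    mrk M (X ∪ Y) + mrk M (X ∩ Y) ≤ mrk M X + mrk M Y := by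
  obtain ⟨I, hI⟩ := M.exists_isBasis' (X ∩ Y)
  obtain ⟨J, hJ, hIJ⟩ := hI.indep.subset_isBasis'_of_subset
    (hI.subset.trans (inter_subset_left.trans subset_union_left))
  rw [basis'_mrk_eq hfin hI, basis'_mrk_eq hfin hJ]
  have hJfin : J.Finite := hfin.subset hJ.indep.subset_ground
  have h1 : (J ∩ X).ncard ≤ mrk M X :=
    indep_ncard_le_mrk hfin (hJ.indep.subset inter_subset_left) inter_subset_right
  have h2 : (J ∩ Y).ncard ≤ mrk M Y :=
    indep_ncard_le_mrk hfin (hJ.indep.subset inter_subset_left) inter_subset_right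
  have hu : (J ∩ X) ∪ (J ∩ Y) = J := by
    rw [← inter_union_distrib_left]; exact inter_eq_left.mpr hJ.subset
  have hi : I ⊆ (J ∩ X) ∩ (J ∩ Y) := by
    rw [← inter_inter_distrib_left]
    exact subset_inter hIJ hI.subset
  have hcard : (J ∩ X).ncard + (J ∩ Y).ncard = J.ncard + ((J ∩ X) ∩ (J ∩ Y)).ncard := by
    rw [← Set.ncard_union_add_ncard_inter _ _ (hJfin.inter_of_left X) (hJfin.inter_of_left Y), hu]
  have hIc : I.ncard ≤ ((J ∩ X) ∩ (J ∩ Y)).ncard :=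
    Set.ncard_le_ncard hi ((hJfin.inter_of_left X).inter_of_left _)
  omega

lemma closure_flat' (M : Matroid α) (X : Set α) : M.IsFlat (M.closure X) := by
  rw [Matroid.closure_def, sInter_eq_iInter]
  have : Nonempty {F // F ∈ {F | M.IsFlat F ∧ X ∩ M.E ⊆ F}} :=
    ⟨⟨M.E, M.ground_isFlat, inter_subset_right⟩⟩
  exact Matroid.IsFlat.iInter fun F => F.2.1

lemma flat_inter (hX : M.IsFlat X) (hY : M.IsFlat Y) : M.IsFlat (X ∩ Y) := by
  rw [Set.inter_eq_iInter]
  exact Matroid.IsFlat.iInter (by rintro (_|_) <;> assumption)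

end Aux

/-- A circuit of a matroid: a minimal dependent subset of the ground set. -/
def Circuit (M : Matroid α) (C : Set α) : Prop :=
  C ⊆ M.E ∧ ¬ M.Indep C ∧ ∀ D ⊂ C, M.Indep D

/-- A matroid is simple if every subset of the ground set with at most two
elements is independent. -/
def SimpleM (M : Matroid α) : Prop :=
  ∀ X ⊆ M.E, X.ncard ≤ 2 → M.Indep X

/-- A modular flat: a flat `X` with `r X + r Y = r (X ⊓ Y) + r (X ⊔ Y)` for every flat `Y`
(meet of flats is intersection; join is the closure of the union). -/
def ModularFlat (M : Matroid α) (X : Set α) : Prop :=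
  M.IsFlat X ∧ ∀ Y, M.IsFlat Y →
    mrk M X + mrk M Y = mrk M (X ∩ Y) + mrk M (M.closure (X ∪ Y))

/-- A matroid is round if its ground set is not the union of two proper flats. -/
def Round (M : Matroid α) : Prop :=
  ¬ ∃ F₁ F₂ : Set α, M.IsFlat F₁ ∧ M.IsFlat F₂ ∧ F₁ ≠ M.E ∧ F₂ ≠ M.E ∧ M.E = F₁ ∪ F₂

/-- The intersection of two modular flats of a simple matroid is a modular flat. -/
theorem stmt1 (M : Matroid α) (hfin : M.E.Finite) (hsimple : SimpleM M)
    {X Y : Set α} (hX : ModularFlat M X) (hY : ModularFlat M Y) :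
    ModularFlat M (X ∩ Y) := by
  obtain ⟨hXf, hXm⟩ := hX
  obtain ⟨hYf, hYm⟩ := hY
  refine ⟨flat_inter hXf hYf, fun Z hZ => ?_⟩
  have hYZf : M.IsFlat (Y ∩ Z) := flat_inter hYf hZ
  set F := M.closure ((X ∩ Y) ∪ (Y ∩ Z)) with hF
  have hFf : M.IsFlat F := closure_flat' M _
  have m1 := hXm Y hYf
  have m2 := hXm (Y ∩ Z) hYZf
  have m3 := hYm Z hZ
  have m4 := hXm F hFf
  rw [mrk_closure_eq hfin] at m1 m2 m3
  rw [← inter_assoc] at m2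
  have hsubE : (X ∩ Y) ∪ (Y ∩ Z) ⊆ M.E :=
    union_subset (inter_subset_left.trans hXf.subset_ground)
      (inter_subset_left.trans hYf.subset_ground)
  have cF : mrk M F = mrk M ((X ∩ Y) ∪ (Y ∩ Z)) := mrk_closure_eq hfin _
  have cXF : mrk M (M.closure (X ∪ F)) = mrk M (X ∪ (Y ∩ Z)) := by
    rw [hF, Matroid.closure_union_closure_right_eq,
      show X ∪ ((X ∩ Y) ∪ (Y ∩ Z)) = X ∪ (Y ∩ Z) from by
        ext a; simp only [mem_union, mem_inter_iff]; tauto,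
      mrk_closure_eq hfin]
  rw [cF, cXF] at m4
  have mono1 : mrk M (X ∩ Y) ≤ mrk M (X ∩ F) := by
    refine mrk_mono hfin (subset_inter inter_subset_left ?_)
    exact subset_union_left.trans (M.subset_closure _ hsubE)
  have s2 : mrk M (Y ∪ Z) + mrk M ((X ∩ Y) ∪ (Y ∩ Z)) ≤
      mrk M Y + mrk M ((X ∩ Y) ∪ Z) := by
    have h := mrk_submod hfin Y ((X ∩ Y) ∪ Z)
    rw [show Y ∪ ((X ∩ Y) ∪ Z) = Y ∪ Z from by
        ext a; simp only [mem_union, mem_inter_iff]; tauto,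
      show Y ∩ ((X ∩ Y) ∪ Z) = (X ∩ Y) ∪ (Y ∩ Z) from by
        ext a; simp only [mem_union, mem_inter_iff]; tauto] at h
    exact h
  have s3 := mrk_submod hfin (X ∩ Y) Z
  rw [mrk_closure_eq hfin]
  omega

end Paper
end

section
/- Let X be a modular coatom of a simple matroid M on ground set E. Then for every element e in E \ X, the interval [e, 1̂] in the lattice of flats of M (equivalently, the simplification of M/e) is isomorphic as a lattice to the interval [0̂, X] (equivalently, the lattice of flats of M|X). -/
open scoped Classical

namespace Paper

open Set

variable {α : Type*}

section aux
variable {M : Matroid α} {I J S T F F' G : Set α} {e : α}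

lemma flat_closure (M : Matroid α) (S : Set α) : M.IsFlat (M.closure S) := by
  have hne : Nonempty {F // M.IsFlat F ∧ S ∩ M.E ⊆ F} := ⟨⟨M.E, M.ground_isFlat, inter_subset_right⟩⟩
  have h := Matroid.IsFlat.iInter (M := M)
    (Fs := fun F : {F // M.IsFlat F ∧ S ∩ M.E ⊆ F} => F.1) (fun F => F.2.1)
  rw [Matroid.closure_def, sInter_eq_iInter]
  exact h

lemma mrk_bdd (hfin : M.E.Finite) :
    BddAbove {n | ∃ I, M.Indep I ∧ I ⊆ S ∧ I.ncard = n} := by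
  refine ⟨M.E.ncard, ?_⟩
  rintro n ⟨J, hJ, -, rfl⟩
  exact Set.ncard_le_ncard hJ.subset_ground hfin

lemma mrk_nonempty : (0 : ℕ) ∈ {n | ∃ I, M.Indep I ∧ I ⊆ S ∧ I.ncard = n} :=
  ⟨∅, M.empty_indep, empty_subset _, by simp⟩

lemma mrk_eq_of_basis' (hfin : M.E.Finite) (hI : M.IsBasis' I S) : mrk M S = I.ncard := by
  refine le_antisymm (csSup_le ⟨0, mrk_nonempty⟩ ?_)
    (le_csSup (mrk_bdd hfin) ⟨I, hI.indep, hI.subset, rfl⟩)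
  rintro n ⟨J, hJ, hJS, rfl⟩
  obtain ⟨J', hJ', hJJ'⟩ := hJ.subset_isBasis'_of_subset hJS
  have hcard : J'.ncard = I.ncard :=
    (Matroid.isBase_restrict_iff'.2 hJ').ncard_eq_ncard_of_isBase (Matroid.isBase_restrict_iff'.2 hI)
  exact hcard ▸ Set.ncard_le_ncard hJJ' (hfin.subset hJ'.indep.subset_ground)

lemma mrk_eq_of_basis (hfin : M.E.Finite) (hI : M.IsBasis I S) : mrk M S = I.ncard :=
  mrk_eq_of_basis' hfin hI.isBasis'

lemma mrk_mono_s7 (hfin : M.E.Finite) (hST : S ⊆ T) : mrk M S ≤ mrk M T := by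
  refine csSup_le ⟨0, mrk_nonempty⟩ ?_
  rintro n ⟨J, hJ, hJS, rfl⟩
  exact le_csSup (mrk_bdd hfin) ⟨J, hJ, hJS.trans hST, rfl⟩

lemma mrk_closure (hfin : M.E.Finite) (S : Set α) : mrk M (M.closure S) = mrk M S := by
  obtain ⟨I, hI⟩ := M.exists_isBasis' S
  rw [mrk_eq_of_basis' hfin hI, mrk_eq_of_basis hfin hI.isBasis_closure_right]

lemma flat_eq_of_mrk_le (hfin : M.E.Finite) (hF : M.IsFlat F) (hF' : M.IsFlat F')
    (hss : F ⊆ F') (hr : mrk M F' ≤ mrk M F) : F = F' := by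
  obtain ⟨I, hI⟩ := M.exists_isBasis' F
  obtain ⟨J, hJ, hIJ⟩ := hI.indep.subset_isBasis_of_subset (hI.subset.trans hss) hF'.subset_ground
  rw [mrk_eq_of_basis' hfin hI, mrk_eq_of_basis hfin hJ] at hr
  have hJfin : J.Finite := hfin.subset hJ.indep.subset_ground
  have hIJ' : I = J := Set.eq_of_subset_of_ncard_le hIJ hr hJfin
  have h1 : M.closure I = F := by rw [hI.closure_eq_closure, hF.closure]
  have h2 : M.closure J = F' := by rw [hJ.closure_eq_closure, hF'.closure]
  rw [← h1, ← h2, hIJ']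

lemma mrk_insert (hfin : M.E.Finite) (hS : S ⊆ M.E) (heE : e ∈ M.E)
    (hecl : e ∉ M.closure S) : mrk M (insert e S) = mrk M S + 1 := by
  obtain ⟨I, hI⟩ := M.exists_isBasis S hS
  have hclI : M.closure I = M.closure S := hI.closure_eq_closure
  have heI : e ∉ I := fun h => hecl (hclI ▸ M.subset_closure I hI.indep.subset_ground h)
  have hind : M.Indep (insert e I) := by
    rw [hI.indep.insert_indep_iff_of_notMem heI]
    exact ⟨heE, hclI ▸ hecl⟩
  have hbas : M.IsBasis (insert e I) (insert e S) := by
    refine hind.isBasis_of_subset_of_subset_closure (insert_subset_insert hI.subset) ?_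
    refine insert_subset (M.subset_closure _ hind.subset_ground (mem_insert _ _)) ?_
    exact (hI.subset_closure).trans (M.closure_subset_closure (subset_insert _ _))
  rw [mrk_eq_of_basis hfin hbas, mrk_eq_of_basis hfin hI,
    Set.ncard_insert_of_notMem heI (hfin.subset hI.indep.subset_ground)]

end aux

/-- For a modular coatom `X` and `e ∈ E \ X`, the interval `[e, 1̂]` of the lattice of
flats is order-isomorphic to the interval `[0̂, X]` (the lattice of flats of `M|X`). -/
theorem stmt7 (M : Matroid α) (hfin : M.E.Finite) (hsimple : SimpleM M)
    {X : Set α} (hmod : ModularFlat M X) (hcoatom : mrk M X + 1 = mrk M M.E)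
    {e : α} (he : e ∈ M.E \ X) :
    Nonempty ({F : Set α // M.IsFlat F ∧ e ∈ F} ≃o {F : Set α // M.IsFlat F ∧ F ⊆ X}) := by
  obtain ⟨hX, hmodr⟩ := hmod
  have hXE : X ⊆ M.E := hX.subset_ground
  obtain ⟨heE, heX⟩ := he
  have hecX : e ∉ M.closure X := by rwa [hX.closure]
  -- intersections with X of flats are flats
  have hinter : ∀ {F : Set α}, M.IsFlat F → M.IsFlat (X ∩ F) := by
    intro F hF
    have h1 : X ∩ F ⊆ M.E := inter_subset_left.trans hXE
    have h2 : X ∩ F = M.closure (X ∩ F) := by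
      refine (M.subset_closure _ h1).antisymm (subset_inter ?_ ?_)
      · exact (M.closure_subset_closure inter_subset_left).trans_eq hX.closure
      · exact (M.closure_subset_closure inter_subset_right).trans_eq hF.closure
    rw [h2]; exact flat_closure M _
  -- step A : for a flat F containing e, cl (X ∪ F) = E
  have hstepA : ∀ {F : Set α}, M.IsFlat F → e ∈ F → M.closure (X ∪ F) = M.E := by
    intro F hF heF
    have hXF : X ∪ F ⊆ M.E := union_subset hXE hF.subset_ground
    refine flat_eq_of_mrk_le hfin (flat_closure M _) M.ground_isFlat
      (M.closure_subset_ground _) ?_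
    have h1 : insert e X ⊆ M.closure (X ∪ F) :=
      insert_subset (M.subset_closure _ hXF (Or.inr heF))
        (subset_union_left.trans (M.subset_closure _ hXF))
    calc mrk M M.E = mrk M X + 1 := hcoatom.symm
      _ = mrk M (insert e X) := (mrk_insert hfin hXE heE hecX).symm
      _ ≤ mrk M (M.closure (X ∪ F)) := mrk_mono_s7 hfin h1
  -- step B : for a flat F containing e, mrk F = mrk (X ∩ F) + 1
  have hstepB : ∀ {F : Set α}, M.IsFlat F → e ∈ F → mrk M F = mrk M (X ∩ F) + 1 := by
    intro F hF heF
    have := hmodr F hF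
    rw [hstepA hF heF, ← hcoatom] at this
    omega
  -- e not in closure of subsets of X
  have hecl : ∀ {G : Set α}, G ⊆ X → e ∉ M.closure G := by
    intro G hG hmem
    exact heX (((M.closure_subset_closure hG).trans_eq hX.closure) hmem)
  -- ψ ∘ φ = id
  have hpsiphi : ∀ {F : Set α}, M.IsFlat F → e ∈ F → M.closure (insert e (X ∩ F)) = F := by
    intro F hF heF
    have hGE : insert e (X ∩ F) ⊆ M.E := insert_subset heE (inter_subset_left.trans hXE)
    have hsub : M.closure (insert e (X ∩ F)) ⊆ F := by
      have : insert e (X ∩ F) ⊆ F := insert_subset heF inter_subset_right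
      exact (M.closure_subset_closure this).trans_eq hF.closure
    refine flat_eq_of_mrk_le hfin (flat_closure M _) hF hsub ?_
    rw [mrk_closure hfin, mrk_insert hfin (inter_subset_left.trans hXE) heE
      (hecl inter_subset_left), ← hstepB hF heF]
  -- φ ∘ ψ = id
  have hphipsi : ∀ {G : Set α}, M.IsFlat G → G ⊆ X → X ∩ M.closure (insert e G) = G := by
    intro G hG hGX
    have hGE : insert e G ⊆ M.E := insert_subset heE (hGX.trans hXE)
    have hFflat : M.IsFlat (M.closure (insert e G)) := flat_closure M _
    have heF : e ∈ M.closure (insert e G) := M.subset_closure _ hGE (mem_insert _ _)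
    have hrF : mrk M (M.closure (insert e G)) = mrk M G + 1 := by
      rw [mrk_closure hfin, mrk_insert hfin (hGX.trans hXE) heE (hecl hGX)]
    have hrXF := hstepB hFflat heF
    have hGsub : G ⊆ X ∩ M.closure (insert e G) :=
      subset_inter hGX ((subset_insert _ _).trans (M.subset_closure _ hGE))
    refine (flat_eq_of_mrk_le hfin hG (hinter hFflat) hGsub ?_).symm
    omega
  -- build the order isomorphism
  refine ⟨⟨⟨fun F => ⟨X ∩ F.1, hinter F.2.1, inter_subset_left⟩,
    fun G => ⟨M.closure (insert e G.1), flat_closure M _,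
      M.subset_closure _ (insert_subset heE (G.2.2.trans hXE)) (mem_insert _ _)⟩,
    fun F => ?_, fun G => ?_⟩, ?_⟩⟩
  · exact Subtype.ext (hpsiphi F.2.1 F.2.2)
  · exact Subtype.ext (hphipsi G.2.1 G.2.2)
  · rintro ⟨F, hF, heF⟩ ⟨F', hF', heF'⟩
    simp only [Equiv.coe_fn_mk, Subtype.mk_le_mk]
    constructor
    · intro h
      have := M.closure_subset_closure (insert_subset_insert (a := e) h)
      rwa [hpsiphi hF heF, hpsiphi hF' heF'] at this
    · intro h
      exact inter_subset_inter_right _ h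


end Paper
end
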